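/- If the maximum leaf number of a connected graph G is ℓ, then the number of distinct shortest paths in G is at most 2^{4ℓ} · n², where n = |V(G)|. -/

import Mathlib

open SimpleGraph

/-- The number of leaves (vertices of degree 1) of a graph. -/
noncomputable def leafCount {V : Type*} (H : SimpleGraph V) : ℕ :=
  {v : V | (H.neighborSet v).ncard = 1}.ncard

section Stmt17Aux
open Finset

variable {V : Type*} {G : SimpleGraph V} {s t : V}

/-- A walk is determined by its `getVert` function (given equal lengths). -/
lemma walk_getVert_ext : ∀ {s t : V} (p q : G.Walk s t), p.length = q.length →
    (∀ i, p.getVert i = q.getVert i) → p = q := by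
  intro s t p
  induction p with
  | nil => intro q hl _; exact (SimpleGraph.Walk.nil_iff_length_eq.mpr hl.symm).eq_nil.symm
  | cons h p ih =>
    intro q hl hv
    simp only [SimpleGraph.Walk.length_cons] at hl
    have hq : ¬ q.Nil := by rw [SimpleGraph.Walk.not_nil_iff_lt_length]; omega
    obtain ⟨u, hadj, q', rfl⟩ := SimpleGraph.Walk.not_nil_iff.mp hq
    have h1 := hv 1
    simp only [SimpleGraph.Walk.getVert_cons_succ, SimpleGraph.Walk.getVert_zero] at h1
    subst h1
    have : p = q' := by
      apply ih
      · simpa using hl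
      · intro i; simpa [SimpleGraph.Walk.getVert_cons_succ] using hv (i + 1)
    rw [this]

lemma exists_walk_start (p : G.Walk s t) (i : ℕ) :
    ∃ q : G.Walk s (p.getVert i), q.length ≤ i := by
  induction p generalizing i with
  | nil => exact ⟨SimpleGraph.Walk.nil, by simp⟩
  | @cons a b c h p ih =>
    cases i with
    | zero => exact ⟨SimpleGraph.Walk.nil, Nat.le_of_eq rfl⟩
    | succ i =>
      obtain ⟨q, hq⟩ := ih i
      exact ⟨SimpleGraph.Walk.cons h q, by simpa using hq⟩

lemma exists_walk_end (p : G.Walk s t) (i : ℕ) (hi : i ≤ p.length) :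
    ∃ q : G.Walk (p.getVert i) t, q.length + i ≤ p.length := by
  induction p generalizing i with
  | nil =>
    obtain rfl : i = 0 := by simpa using hi
    exact ⟨SimpleGraph.Walk.nil, by simp⟩
  | @cons a b c h p ih =>
    cases i with
    | zero => exact ⟨SimpleGraph.Walk.cons h p, Nat.le_of_eq rfl⟩
    | succ i =>
      obtain ⟨q, hq⟩ := ih i (by simp at hi; omega)
      exact ⟨q, by show q.length + (i + 1) ≤ p.length + 1; omega⟩

lemma dist_getVert_le (hG : G.Connected) (p : G.Walk s t) (i : ℕ) :
    G.dist s (p.getVert i) ≤ i := by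
  obtain ⟨q, hq⟩ := exists_walk_start p i
  exact le_trans (SimpleGraph.dist_le q) hq

/-- On a shortest walk, the `i`-th vertex is at distance exactly `i` from the start. -/
lemma dist_getVert_eq (hG : G.Connected) (p : G.Walk s t) (hp : p.length = G.dist s t)
    {i : ℕ} (hi : i ≤ p.length) : G.dist s (p.getVert i) = i := by
  obtain ⟨q, hq⟩ := exists_walk_end p i hi
  have h1 : G.dist (p.getVert i) t ≤ p.length - i := by
    refine le_trans (SimpleGraph.dist_le q) ?_; omega
  have h2 : G.dist s t ≤ G.dist s (p.getVert i) + G.dist (p.getVert i) t :=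
    hG.dist_triangle
  have h3 := dist_getVert_le hG p i
  omega

/-- The support of a walk is the list of its `getVert`s. -/
lemma support_eq_map (p : G.Walk s t) :
    p.support = (List.range (p.length + 1)).map p.getVert := by
  induction p with
  | nil => simp [SimpleGraph.Walk.support_nil, List.range_succ]
  | @cons a b c h p ih =>
    rw [SimpleGraph.Walk.support_cons, ih, SimpleGraph.Walk.length_cons,
      List.range_succ_eq_map (n := p.length + 1)]
    simp [List.map_map, Function.comp_def, SimpleGraph.Walk.getVert_cons_succ]
section Layers
variable {V : Type*} [Fintype V] {G : SimpleGraph V} {s v w : V}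

open Classical in
/-- The BFS layer at distance `i` from `s`. -/
noncomputable def lay (G : SimpleGraph V) (s : V) (i : ℕ) : Finset V :=
  Finset.univ.filter fun v => G.dist s v = i

open Classical in
/-- Forward neighbours of `v` (one layer further from `s`). -/
noncomputable def fwd (G : SimpleGraph V) (s v : V) : Finset V :=
  Finset.univ.filter fun w => G.Adj v w ∧ G.dist s w = G.dist s v + 1

/-- Maximum forward degree on layer `i`. -/
noncomputable def cmax (G : SimpleGraph V) (s : V) (i : ℕ) : ℕ :=
  (lay G s i).sup fun v => (fwd G s v).card

/-- The eccentricity of `s`. -/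
noncomputable def ecc (G : SimpleGraph V) (s : V) : ℕ :=
  Finset.univ.sup (G.dist s)

lemma mem_lay : v ∈ lay G s i ↔ G.dist s v = i := by simp [lay]

lemma mem_fwd : w ∈ fwd G s v ↔ G.Adj v w ∧ G.dist s w = G.dist s v + 1 := by simp [fwd]

lemma fwd_subset_lay : fwd G s v ⊆ lay G s (G.dist s v + 1) := by
  intro w hw; rw [mem_fwd] at hw; rw [mem_lay]; exact hw.2

lemma card_fwd_le_cmax {i : ℕ} (h : G.dist s v = i) : (fwd G s v).card ≤ cmax G s i := by
  rw [cmax]; exact Finset.le_sup (f := fun v => (fwd G s v).card) (mem_lay.mpr h)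

lemma dist_le_ecc : G.dist s v ≤ ecc G s := Finset.le_sup (Finset.mem_univ v)

lemma lay_nonempty (hG : G.Connected) {i : ℕ} (hi : i ≤ ecc G s) :
    (lay G s i).Nonempty := by
  have hne : (Finset.univ : Finset V).Nonempty := ⟨s, Finset.mem_univ s⟩
  obtain ⟨v0, -, hv0⟩ := Finset.exists_mem_eq_sup Finset.univ hne (G.dist s)
  obtain ⟨p, hp⟩ := hG.exists_walk_length_eq_dist s v0
  have hi' : i ≤ p.length := by rw [hp, ← hv0]; exact hi
  exact ⟨p.getVert i, mem_lay.mpr (dist_getVert_eq hG p hp hi')⟩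

lemma exists_back (hG : G.Connected) (hv : v ≠ s) :
    ∃ u, G.Adj u v ∧ G.dist s u + 1 = G.dist s v := by
  obtain ⟨p, hp⟩ := hG.exists_walk_length_eq_dist s v
  have hd : 0 < G.dist s v := (hG.preconnected s v).pos_dist_of_ne (Ne.symm hv)
  have hL : 0 < p.length := by omega
  have hadj := p.adj_getVert_succ (i := p.length - 1) (by omega)
  rw [show p.length - 1 + 1 = p.length by omega, p.getVert_length] at hadj
  refine ⟨p.getVert (p.length - 1), hadj, ?_⟩
  have := dist_getVert_eq hG p hp (i := p.length - 1) (by omega)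
  omega

lemma cmax_pos (hG : G.Connected) {i : ℕ} (hi : i < ecc G s) : 1 ≤ cmax G s i := by
  obtain ⟨w, hw⟩ := lay_nonempty hG (i := i + 1) hi
  rw [mem_lay] at hw
  have hws : w ≠ s := by
    intro h; subst h; rw [SimpleGraph.dist_self] at hw; omega
  obtain ⟨u, hu, hud⟩ := exists_back hG hws
  have hmem : w ∈ fwd G s u := mem_fwd.mpr ⟨hu, by omega⟩
  calc 1 ≤ (fwd G s u).card := Finset.card_pos.mpr ⟨w, hmem⟩
    _ ≤ cmax G s i := card_fwd_le_cmax (by omega)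

open Classical in
/-- A vertex of layer `i` with maximum forward degree. -/
noncomputable def vstar (G : SimpleGraph V) (s : V) (i : ℕ) : V :=
  if h : (lay G s i).Nonempty then
    (Finset.exists_mem_eq_sup (lay G s i) h fun v => (fwd G s v).card).choose
  else s

lemma vstar_spec {i : ℕ} (h : (lay G s i).Nonempty) :
    G.dist s (vstar G s i) = i ∧ (fwd G s (vstar G s i)).card = cmax G s i := by
  classical
  rw [vstar, dif_pos h]
  obtain ⟨hmem, heq⟩ :=
    (Finset.exists_mem_eq_sup (lay G s i) h fun v => (fwd G s v).card).choose_spec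
  exact ⟨mem_lay.mp hmem, heq.symm⟩

open Classical in
/-- BFS parent assignment: prefer the max-forward-degree vertex of the previous layer. -/
noncomputable def parent (hG : G.Connected) (s v : V) : V :=
  if hv : v = s then s
  else if G.Adj (vstar G s (G.dist s v - 1)) v then vstar G s (G.dist s v - 1)
  else (exists_back hG hv).choose

lemma parent_spec (hG : G.Connected) (hv : v ≠ s) :
    G.Adj v (parent hG s v) ∧ G.dist s (parent hG s v) + 1 = G.dist s v := by
  classical
  have hd : 0 < G.dist s v := (hG.preconnected s v).pos_dist_of_ne (Ne.symm hv)
  rw [parent, dif_neg hv]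
  by_cases hadj : G.Adj (vstar G s (G.dist s v - 1)) v
  · rw [if_pos hadj]
    have hne : (lay G s (G.dist s v - 1)).Nonempty :=
      lay_nonempty hG (le_trans (by omega) (dist_le_ecc (v := v)))
    have := (vstar_spec hne).1
    exact ⟨hadj.symm, by omega⟩
  · rw [if_neg hadj]
    obtain ⟨h1, h2⟩ := (exists_back hG hv).choose_spec
    exact ⟨h1.symm, h2⟩

lemma parent_eq_vstar (hG : G.Connected) (hv : v ≠ s)
    (hadj : G.Adj (vstar G s (G.dist s v - 1)) v) :
    parent hG s v = vstar G s (G.dist s v - 1) := by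
  rw [parent, dif_neg hv, if_pos hadj]

/-- The BFS spanning tree. -/
noncomputable def bfsTree (hG : G.Connected) (s : V) : SimpleGraph V :=
  SimpleGraph.fromRel fun a b => a ≠ s ∧ parent hG s a = b

lemma bfsTree_adj {a b : V} (hG : G.Connected) :
    (bfsTree hG s).Adj a b ↔ a ≠ b ∧
      ((a ≠ s ∧ parent hG s a = b) ∨ (b ≠ s ∧ parent hG s b = a)) := by
  simp [bfsTree, SimpleGraph.fromRel_adj]

lemma bfsTree_le (hG : G.Connected) : bfsTree hG s ≤ G := by
  intro a b hab
  rw [bfsTree_adj] at hab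
  rcases hab.2 with ⟨ha, hp⟩ | ⟨hb, hp⟩
  · exact hp ▸ (parent_spec hG ha).1
  · exact (hp ▸ (parent_spec hG hb).1).symm

lemma bfsTree_adj_parent (hG : G.Connected) (hv : v ≠ s) :
    (bfsTree hG s).Adj v (parent hG s v) := by
  rw [bfsTree_adj]
  have := (parent_spec hG hv).2
  exact ⟨fun h => by rw [← h] at this; omega, Or.inl ⟨hv, rfl⟩⟩

lemma bfsTree_connected (hG : G.Connected) : (bfsTree hG s).Connected := by
  have key : ∀ n (v : V), G.dist s v = n → (bfsTree hG s).Reachable v s := by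
    intro n
    induction n using Nat.strong_induction_on with
    | _ n ih =>
      intro v hv
      by_cases hvs : v = s
      · exact hvs ▸ SimpleGraph.Reachable.refl v
      · have hspec := parent_spec hG hvs
        have hlt : G.dist s (parent hG s v) < n := by omega
        exact ((bfsTree_adj_parent hG hvs).reachable).trans
          (ih _ hlt _ rfl)
  have : Nonempty V := hG.nonempty
  exact ⟨fun u v => ((key _ u rfl)).trans (key _ v rfl).symm⟩

end Layers
section Acyclic
variable {V : Type*} [Fintype V] {G : SimpleGraph V} {s : V}

lemma bfsTree_acyclic (hG : G.Connected) : (bfsTree hG s).IsAcyclic := by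
  classical
  intro v c hc
  have hne : c.support.toFinset.Nonempty :=
    ⟨v, List.mem_toFinset.mpr c.start_mem_support⟩
  obtain ⟨w, hwmem, hwsup⟩ := Finset.exists_mem_eq_sup _ hne (G.dist s)
  have hwmax : ∀ x ∈ c.support, G.dist s x ≤ G.dist s w := by
    intro x hx
    rw [← hwsup]
    exact Finset.le_sup (List.mem_toFinset.mpr hx)
  have hw : w ∈ c.support := List.mem_toFinset.mp hwmem
  set c2 := c.rotate w hw with hc2def
  have hc2 : c2.IsCycle := hc.rotate hw
  have hL : 3 ≤ c2.length := hc2.three_le_length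
  have hsup2 : ∀ x ∈ c2.support, G.dist s x ≤ G.dist s w := by
    intro x hx
    rw [c2.support_eq_cons] at hx
    rcases List.mem_cons.mp hx with rfl | hx
    · exact le_refl _
    · refine hwmax x (List.mem_of_mem_tail ?_)
      exact (SimpleGraph.Walk.support_rotate c w hw).mem_iff.mp hx
  have key : ∀ a, (bfsTree hG s).Adj w a → a ∈ c2.support → parent hG s w = a := by
    intro a hadj hamem
    rw [bfsTree_adj] at hadj
    rcases hadj.2 with h | h
    · exact h.2
    · exfalso
      have := (parent_spec hG h.1).2
      rw [h.2] at this
      have := hsup2 a hamem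
      omega
  have h1 : (bfsTree hG s).Adj w (c2.getVert 1) := by
    have := c2.adj_getVert_succ (i := 0) (by omega)
    rwa [c2.getVert_zero] at this
  have h2 : (bfsTree hG s).Adj w (c2.getVert (c2.length - 1)) := by
    have := c2.adj_getVert_succ (i := c2.length - 1) (by omega)
    rw [show c2.length - 1 + 1 = c2.length by omega, c2.getVert_length] at this
    exact this.symm
  have m1 : c2.getVert 1 ∈ c2.support :=
    SimpleGraph.Walk.mem_support_iff_exists_getVert.mpr ⟨1, rfl, by omega⟩
  have m2 : c2.getVert (c2.length - 1) ∈ c2.support :=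
    SimpleGraph.Walk.mem_support_iff_exists_getVert.mpr ⟨c2.length - 1, rfl, by omega⟩
  have heq : c2.getVert 1 = c2.getVert (c2.length - 1) := by
    rw [← key _ h1 m1, ← key _ h2 m2]
  have htail : c2.support.tail = (List.range c2.length).map (fun k => c2.getVert (k + 1)) := by
    rw [support_eq_map, List.range_succ_eq_map]
    simp [List.map_map, Function.comp_def]
  have hnd : c2.support.tail.Nodup := hc2.support_nodup
  rw [htail] at hnd
  have hlen : ((List.range c2.length).map fun k => c2.getVert (k + 1)).length = c2.length := by
    simp
  have h0lt : 0 < ((List.range c2.length).map fun k => c2.getVert (k + 1)).length := by omega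
  have h2lt : c2.length - 2 < ((List.range c2.length).map fun k => c2.getVert (k + 1)).length := by
    omega
  have := (hnd.getElem_inj_iff (hi := h0lt) (hj := h2lt)).mp ?_
  · omega
  · simp only [List.getElem_map, List.getElem_range]
    rw [show c2.length - 2 + 1 = c2.length - 1 by omega]
    exact heq

/-- The BFS tree is a spanning tree. -/
lemma bfsTree_isTree (hG : G.Connected) : (bfsTree hG s).IsTree :=
  ⟨bfsTree_connected hG, bfsTree_acyclic hG⟩

end Acyclic
section LeafBound
variable {V : Type*} [Fintype V] {G : SimpleGraph V} {s : V}

lemma leaf_of_not_parent (hG : G.Connected) {v : V} (hv : v ≠ s)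
    (hnp : ∀ w, w ≠ s → parent hG s w ≠ v) :
    ((bfsTree hG s).neighborSet v).ncard = 1 := by
  have hset : (bfsTree hG s).neighborSet v = {parent hG s v} := by
    ext u
    simp only [SimpleGraph.mem_neighborSet, Set.mem_singleton_iff]
    constructor
    · intro h
      rw [bfsTree_adj] at h
      rcases h.2 with h' | h'
      · exact h'.2.symm
      · exact absurd h'.2 (hnp u h'.1)
    · rintro rfl
      exact bfsTree_adj_parent hG hv
  rw [hset, Set.ncard_singleton]

lemma sum_cmax_le (hG : G.Connected) (ℓ : ℕ)
    (hub : ∀ T : SimpleGraph V, T ≤ G → T.IsTree → leafCount T ≤ ℓ) (s : V) :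
    ∑ i ∈ Finset.range (ecc G s), cmax G s i ≤ ℓ + ecc G s := by
  classical
  set E := ecc G s with hE
  set P : Finset V := (Finset.univ.filter (· ≠ s)).image (parent hG s) with hPdef
  set X : Finset V := insert s P with hXdef
  set W : Finset V := Finset.univ \ X with hWdef
  -- every vertex outside X is a leaf of the BFS tree
  have hWleaf : W.card ≤ leafCount (bfsTree hG s) := by
    rw [leafCount]
    have hsub : ↑W ⊆ {v : V | ((bfsTree hG s).neighborSet v).ncard = 1} := by
      intro v hv
      simp only [hWdef, hXdef, Finset.coe_sdiff, Set.mem_diff, Finset.coe_insert,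
        Set.mem_insert_iff, Finset.mem_coe, Finset.coe_univ] at hv
      push_neg at hv
      obtain ⟨-, hvs, hvP⟩ := hv
      refine leaf_of_not_parent hG hvs fun w hws hpw => ?_
      exact hvP (Finset.mem_image.mpr ⟨w, Finset.mem_filter.mpr ⟨Finset.mem_univ w, hws⟩, hpw⟩)
    calc W.card = (↑W : Set V).ncard := (Set.ncard_coe_finset W).symm
      _ ≤ _ := Set.ncard_le_ncard hsub (Set.toFinite _)
  have hT : leafCount (bfsTree hG s) ≤ ℓ := hub _ (bfsTree_le hG) (bfsTree_isTree hG)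
  have hcardWX : W.card + X.card = Fintype.card V := by
    rw [hWdef, Finset.card_sdiff_add_card_eq_card (Finset.subset_univ X), Finset.card_univ]
  have hXP : X.card ≤ 1 + P.card := by
    rw [hXdef, add_comm]
    exact Finset.card_insert_le _ _
  -- bounding the parents set
  have hP : P ⊆ (Finset.range E).biUnion (fun i =>
      insert (vstar G s i) ((lay G s (i+1) \ fwd G s (vstar G s i)).image (parent hG s))) := by
    intro u hu
    simp only [hPdef, Finset.mem_image, Finset.mem_filter] at hu
    obtain ⟨v, ⟨-, hvs⟩, rfl⟩ := hu
    have hd1 : 1 ≤ G.dist s v := (hG.preconnected s v).pos_dist_of_ne (Ne.symm hvs)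
    have hdE : G.dist s v ≤ E := dist_le_ecc
    refine Finset.mem_biUnion.mpr ⟨G.dist s v - 1, Finset.mem_range.mpr (by omega), ?_⟩
    by_cases hadj : G.Adj (vstar G s (G.dist s v - 1)) v
    · rw [parent_eq_vstar hG hvs hadj]
      exact Finset.mem_insert_self _ _
    · refine Finset.mem_insert_of_mem (Finset.mem_image.mpr ⟨v, ?_, rfl⟩)
      rw [Finset.mem_sdiff, show G.dist s v - 1 + 1 = G.dist s v by omega]
      exact ⟨mem_lay.mpr rfl, fun hmem => hadj (mem_fwd.mp hmem).1⟩
  have hvstar : ∀ i, i < E → G.dist s (vstar G s i) = i ∧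
      (fwd G s (vstar G s i)).card = cmax G s i :=
    fun i hi => vstar_spec (lay_nonempty hG (le_of_lt hi))
  have hcb : ∀ i, i < E → cmax G s i ≤ (lay G s (i+1)).card := by
    intro i hi
    rw [← (hvstar i hi).2]
    refine Finset.card_le_card ?_
    have := fwd_subset_lay (G := G) (s := s) (v := vstar G s i)
    rwa [(hvstar i hi).1] at this
  have hPcard : P.card ≤ ∑ i ∈ Finset.range E, (1 + ((lay G s (i+1)).card - cmax G s i)) := by
    refine le_trans (Finset.card_le_card hP) (le_trans Finset.card_biUnion_le ?_)
    refine Finset.sum_le_sum fun i hi => ?_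
    have hiE := Finset.mem_range.mp hi
    refine le_trans (Finset.card_insert_le _ _) ?_
    have himg := Finset.card_image_le (s := lay G s (i+1) \ fwd G s (vstar G s i))
      (f := parent hG s)
    have hsd : (lay G s (i+1) \ fwd G s (vstar G s i)).card =
        (lay G s (i+1)).card - cmax G s i := by
      rw [Finset.card_sdiff_of_subset ?_, (hvstar i hiE).2]
      have := fwd_subset_lay (G := G) (s := s) (v := vstar G s i)
      rwa [(hvstar i hiE).1] at this
    omega
  -- layer partition
  have hbieq : (Finset.range (E+1)).biUnion (lay G s) = Finset.univ := by
    ext v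
    simp only [Finset.mem_biUnion, Finset.mem_range, Finset.mem_univ, iff_true]
    exact ⟨G.dist s v, by have : G.dist s v ≤ E := dist_le_ecc; omega, mem_lay.mpr rfl⟩
  have hdisj : ∀ i ∈ Finset.range (E+1), ∀ j ∈ Finset.range (E+1), i ≠ j →
      Disjoint (lay G s i) (lay G s j) := by
    intro i _ j _ hij
    rw [Finset.disjoint_left]
    intro a hai haj
    rw [mem_lay] at hai haj
    omega
  have hpart : ∑ i ∈ Finset.range (E+1), (lay G s i).card = Fintype.card V := by
    rw [← Finset.card_biUnion hdisj, hbieq, Finset.card_univ]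
  have hlay0 : (lay G s 0).card = 1 := by
    have : lay G s 0 = {s} := by
      ext v
      simp only [mem_lay, Finset.mem_singleton]
      rw [hG.dist_eq_zero_iff]
      exact comm
    rw [this, Finset.card_singleton]
  have hsum1 : 1 + ∑ i ∈ Finset.range E, (lay G s (i+1)).card = Fintype.card V := by
    rw [Finset.sum_range_succ'] at hpart
    omega
  -- putting it together
  have hkey : ∑ i ∈ Finset.range E, cmax G s i + P.card ≤
      E + ∑ i ∈ Finset.range E, (lay G s (i+1)).card := by
    calc ∑ i ∈ Finset.range E, cmax G s i + P.card
        ≤ ∑ i ∈ Finset.range E, cmax G s i +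
          ∑ i ∈ Finset.range E, (1 + ((lay G s (i+1)).card - cmax G s i)) := by omega
      _ = ∑ i ∈ Finset.range E, (cmax G s i + (1 + ((lay G s (i+1)).card - cmax G s i))) := by
          rw [← Finset.sum_add_distrib]
      _ = ∑ i ∈ Finset.range E, (1 + (lay G s (i+1)).card) := by
          refine Finset.sum_congr rfl fun i hi => ?_
          have := hcb i (Finset.mem_range.mp hi)
          omega
      _ = E + ∑ i ∈ Finset.range E, (lay G s (i+1)).card := by
          rw [Finset.sum_add_distrib, Finset.sum_const, Finset.card_range, smul_eq_mul, mul_one]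
  omega

end LeafBound
section Counting
variable {V : Type*} [Fintype V] {G : SimpleGraph V} {s t : V}

lemma prod_cmax_le (hG : G.Connected) (ℓ : ℕ)
    (hub : ∀ T : SimpleGraph V, T ≤ G → T.IsTree → leafCount T ≤ ℓ) (s : V)
    {m : ℕ} (hm : m ≤ ecc G s) :
    ∏ i ∈ Finset.range m, cmax G s i ≤ 2 ^ ℓ := by
  have hsum := sum_cmax_le hG ℓ hub s
  have heq : ∑ i ∈ Finset.range (ecc G s), (cmax G s i - 1) + ecc G s =
      ∑ i ∈ Finset.range (ecc G s), cmax G s i := by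
    calc ∑ i ∈ Finset.range (ecc G s), (cmax G s i - 1) + ecc G s
        = ∑ i ∈ Finset.range (ecc G s), ((cmax G s i - 1) + 1) := by
          rw [Finset.sum_add_distrib, Finset.sum_const, Finset.card_range, smul_eq_mul, mul_one]
      _ = ∑ i ∈ Finset.range (ecc G s), cmax G s i :=
          Finset.sum_congr rfl fun i hi => by
            have := cmax_pos hG (Finset.mem_range.mp hi); omega
  have hsum' : ∑ i ∈ Finset.range (ecc G s), (cmax G s i - 1) ≤ ℓ := by omega
  calc ∏ i ∈ Finset.range m, cmax G s i
      ≤ ∏ i ∈ Finset.range (ecc G s), cmax G s i :=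
        Finset.prod_le_prod_of_subset_of_one_le' (Finset.range_subset_range.mpr hm)
          (fun i hi _ => cmax_pos hG (Finset.mem_range.mp hi))
    _ ≤ ∏ i ∈ Finset.range (ecc G s), 2 ^ (cmax G s i - 1) :=
        Finset.prod_le_prod' fun i _ => by
          rcases Nat.eq_zero_or_pos (cmax G s i) with h | h
          · rw [h]; exact Nat.zero_le _
          · have h2 := Nat.lt_two_pow_self (n := cmax G s i - 1)
            omega
    _ = 2 ^ (∑ i ∈ Finset.range (ecc G s), (cmax G s i - 1)) :=
        Finset.prod_pow_eq_pow_sum _ _ _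
    _ ≤ 2 ^ ℓ := Nat.pow_le_pow_right (by norm_num) hsum'

open Classical in
/-- Finset of "layered sequences" of length `i` starting at `s`. -/
noncomputable def seqF (G : SimpleGraph V) (s : V) (i : ℕ) : Finset (Fin (i+1) → V) :=
  Finset.univ.filter fun f => f 0 = s ∧
    ∀ j, ∀ hj : j < i, G.Adj (f ⟨j, by omega⟩) (f ⟨j+1, by omega⟩) ∧
      G.dist s (f ⟨j+1, by omega⟩) = j + 1

lemma card_seqF (s : V) : ∀ i, (seqF G s i).card ≤ ∏ j ∈ Finset.range i, cmax G s j := by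
  classical
  intro i
  induction i with
  | zero =>
    have hsub : seqF G s 0 ⊆ {fun _ => s} := by
      intro f hf
      simp only [seqF, Finset.mem_filter] at hf
      rw [Finset.mem_singleton]
      funext j
      obtain rfl : j = 0 := Fin.ext (by omega)
      exact hf.2.1
    simpa using Finset.card_le_card hsub
  | succ i ih =>
    set ρ : (Fin (i+2) → V) → (Fin (i+1) → V) :=
      fun f j => f ⟨j.val, by omega⟩ with hρ
    have key1 : ∀ f ∈ seqF G s (i+1), ρ f ∈ seqF G s i := by
      intro f hf
      simp only [seqF, Finset.mem_filter, Finset.mem_univ, true_and] at hf ⊢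
      exact ⟨hf.1, fun j hj => hf.2 j (by omega)⟩
    have key2 : ∀ b ∈ (seqF G s (i+1)).image ρ,
        ((seqF G s (i+1)).filter fun g => ρ g = b).card ≤ cmax G s i := by
      intro b hb
      obtain ⟨f, hf, rfl⟩ := Finset.mem_image.mp hb
      simp only [seqF, Finset.mem_filter, Finset.mem_univ, true_and] at hf
      have hu : G.dist s (f ⟨i, by omega⟩) = i := by
        cases i with
        | zero => exact hf.1 ▸ SimpleGraph.dist_self
        | succ k => exact (hf.2 k (by omega)).2
      refine le_trans (Finset.card_le_card_of_injOn (fun g => g ⟨i+1, by omega⟩) ?_ ?_)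
        (card_fwd_le_cmax hu)
      · intro g hg
        simp only [Finset.coe_filter, Set.mem_setOf_eq, seqF, Finset.mem_filter, Finset.mem_univ, true_and] at hg
        obtain ⟨⟨hg0, hgcond⟩, hgρ⟩ := hg
        have hgi : g ⟨i, by omega⟩ = f ⟨i, by omega⟩ := congrFun hgρ ⟨i, by omega⟩
        have hcond := hgcond i (by omega)
        rw [Finset.mem_coe, mem_fwd, hu]
        constructor
        · rw [← hgi]; exact hcond.1
        · exact hcond.2
      · intro g1 hg1 g2 hg2 hlast
        simp only [Finset.coe_filter, Set.mem_setOf_eq] at hg1 hg2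
        funext k
        rcases Nat.lt_or_ge k.val (i+1) with hk | hk
        · have e1 : g1 k = ρ g1 ⟨k.val, hk⟩ := rfl
          have e2 : g2 k = ρ g2 ⟨k.val, hk⟩ := rfl
          rw [e1, e2, hg1.2, hg2.2]
        · have hkv : k.val = i + 1 := by have := k.isLt; omega
          have hk2 : k = ⟨i+1, by omega⟩ := Fin.ext (hkv.trans rfl)
          rw [hk2]
          exact hlast
    calc (seqF G s (i+1)).card
        ≤ cmax G s i * ((seqF G s (i+1)).image ρ).card :=
          Finset.card_le_mul_card_image _ _ key2
      _ ≤ cmax G s i * (seqF G s i).card := by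
          refine Nat.mul_le_mul_left _ (Finset.card_le_card ?_)
          exact Finset.image_subset_iff.mpr key1
      _ ≤ cmax G s i * ∏ j ∈ Finset.range i, cmax G s j := Nat.mul_le_mul_left _ ih
      _ = ∏ j ∈ Finset.range (i+1), cmax G s j := by rw [Finset.prod_range_succ, mul_comm]

/-- The shortest walks from `s` to `t` form a finite set of cardinality
at most `∏ cmax`. -/
lemma shortestWalks_bound (hG : G.Connected) (s t : V) :
    {p : G.Walk s t | p.length = G.dist s t}.Finite ∧
    {p : G.Walk s t | p.length = G.dist s t}.ncard ≤
      ∏ i ∈ Finset.range (G.dist s t), cmax G s i := by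
  classical
  set m := G.dist s t with hm
  set S : Set (G.Walk s t) := {p | p.length = m} with hS
  set Φ : G.Walk s t → (Fin (m+1) → V) := fun p j => p.getVert j.val with hΦ
  have hmaps : ∀ p ∈ S, Φ p ∈ (seqF G s m : Finset _) := by
    intro p hp
    have hp' : p.length = m := hp
    simp only [seqF, Finset.mem_filter, Finset.mem_univ, true_and]
    refine ⟨p.getVert_zero, fun j hj => ?_⟩
    constructor
    · exact p.adj_getVert_succ (i := j) (by omega)
    · exact dist_getVert_eq hG p (hp'.trans hm) (i := j + 1) (by omega)
  have hinj : Set.InjOn Φ S := by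
    intro p hp q hq h
    have hp' : p.length = m := hp
    have hq' : q.length = m := hq
    refine walk_getVert_ext p q (by rw [hp', hq']) fun i => ?_
    rcases Nat.lt_or_ge i (m+1) with hi | hi
    · exact congrFun h ⟨i, hi⟩
    · rw [p.getVert_of_length_le (by omega), q.getVert_of_length_le (by omega)]
  have himg : Φ '' S ⊆ ↑(seqF G s m) := by
    rintro _ ⟨p, hp, rfl⟩; exact hmaps p hp
  have hfin : S.Finite :=
    Set.Finite.of_finite_image (Set.Finite.subset (Finset.finite_toSet _) himg) hinj
  refine ⟨hfin, ?_⟩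
  calc S.ncard = (Φ '' S).ncard := (Set.ncard_image_of_injOn hinj).symm
    _ ≤ (↑(seqF G s m) : Set _).ncard :=
        Set.ncard_le_ncard himg (Finset.finite_toSet _)
    _ = (seqF G s m).card := Set.ncard_coe_finset _
    _ ≤ ∏ i ∈ Finset.range m, cmax G s i := card_seqF s m

end Counting

end Stmt17Aux

/-- if the maximum leaf number of a connected graph `G` is `ℓ` (the maximum, over
all spanning trees `H ≤ G`, of the number of leaves of `H`), then the number of distinct
shortest paths in `G` is at most `2^(4ℓ) · n²`. -/
theorem stmt17 {V : Type*} [Fintype V] (G : SimpleGraph V) (hG : G.Connected) (ℓ : ℕ)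
    (hml : IsGreatest {n : ℕ | ∃ H : SimpleGraph V, H ≤ G ∧ H.IsTree ∧ leafCount H = n} ℓ) :
    {x : Σ s t : V, G.Walk s t |
        x.2.2.IsPath ∧ x.2.2.length = G.dist x.1 x.2.1}.ncard
      ≤ 2 ^ (4 * ℓ) * (Fintype.card V) ^ 2 := by
  classical
  have hub : ∀ T : SimpleGraph V, T ≤ G → T.IsTree → leafCount T ≤ ℓ :=
    fun T hle htree => hml.2 ⟨T, hle, htree, rfl⟩
  have hpair : ∀ s t : V, {p : G.Walk s t | p.length = G.dist s t}.ncard ≤ 2 ^ (4 * ℓ) := by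
    intro s t
    refine le_trans (shortestWalks_bound hG s t).2 (le_trans (prod_cmax_le hG ℓ hub s
      (m := G.dist s t) dist_le_ecc) ?_)
    exact Nat.pow_le_pow_right (by norm_num) (by omega)
  set TS : Set (Σ s t : V, G.Walk s t) :=
    {x | x.2.2.IsPath ∧ x.2.2.length = G.dist x.1 x.2.1} with hTS
  set big : Finset (Σ s t : V, G.Walk s t) :=
    Finset.univ.biUnion (fun st : V × V =>
      ((shortestWalks_bound hG st.1 st.2).1.toFinset.image
        fun p => (⟨st.1, st.2, p⟩ : Σ s t : V, G.Walk s t))) with hbig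
  have hsub : TS ⊆ ↑big := by
    rintro ⟨s, t, p⟩ hx
    obtain ⟨hpath, hlen⟩ := hx
    simp only [hbig, Finset.mem_coe, Finset.mem_biUnion, Finset.mem_univ, true_and]
    exact ⟨(s, t), Finset.mem_image.mpr
      ⟨p, (Set.Finite.mem_toFinset _).mpr hlen, rfl⟩⟩
  calc TS.ncard ≤ (↑big : Set _).ncard := Set.ncard_le_ncard hsub (Finset.finite_toSet _)
    _ = big.card := Set.ncard_coe_finset _
    _ ≤ ∑ st ∈ (Finset.univ : Finset (V × V)),
        ((shortestWalks_bound hG st.1 st.2).1.toFinset.image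
          fun p => (⟨st.1, st.2, p⟩ : Σ s t : V, G.Walk s t)).card :=
      Finset.card_biUnion_le
    _ ≤ ∑ _st ∈ (Finset.univ : Finset (V × V)), 2 ^ (4 * ℓ) := by
      refine Finset.sum_le_sum fun st _ => ?_
      refine le_trans Finset.card_image_le ?_
      rw [← Set.ncard_eq_toFinset_card _ (shortestWalks_bound hG st.1 st.2).1]
      exact hpair st.1 st.2
    _ = 2 ^ (4 * ℓ) * (Fintype.card V) ^ 2 := by
      rw [Finset.sum_const, smul_eq_mul, Finset.card_univ, Fintype.card_prod, mul_comm, sq]
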